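/- (Severi–Guareschi) Let A ⊆ ℝᵐ, x̂ ∈ A an accumulation point of A, f : A → ℝᵏ, and L : ℝᵐ → ℝᵏ linear. Then f is differentiable at x̂ with differential L if and only if f is continuous at x̂ and the upper tangent cone of graph(f) at (x̂, f(x̂)) is contained in graph(L). -/

import Mathlib

open Filter Metric Topology

/-- Upper tangent cone (sequential description) in a normed space. -/
def upperTangentCone {E : Type*} [NormedAddCommGroup E] [NormedSpace ℝ E]
    (S : Set E) (p : E) : Set E :=
  {w | ∃ (lam : ℕ → ℝ) (u : ℕ → E),
      (∀ k, 0 < lam k) ∧ Filter.Tendsto lam Filter.atTop (𝓝 0) ∧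
      (∀ k, u k ∈ S) ∧ Filter.Tendsto u Filter.atTop (𝓝 p) ∧
      Filter.Tendsto (fun k => (lam k)⁻¹ • (u k - p)) Filter.atTop (𝓝 w)}

/-- Severi–Guareschi: `f` is differentiable at `x̂` (relative to `A`) with differential `L`
iff `f` is continuous at `x̂` relative to `A` and the upper tangent cone of the graph of `f`
at `(x̂, f x̂)` is contained in the graph of `L`. -/
theorem severi_guareschi_differentiability {m k : ℕ}
    (A : Set (EuclideanSpace ℝ (Fin m)))
    (f : EuclideanSpace ℝ (Fin m) → EuclideanSpace ℝ (Fin k))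
    (x : EuclideanSpace ℝ (Fin m)) (hxA : x ∈ A) (hacc : AccPt x (Filter.principal A))
    (L : EuclideanSpace ℝ (Fin m) →ₗ[ℝ] EuclideanSpace ℝ (Fin k)) :
    Filter.Tendsto (fun y => ‖y - x‖⁻¹ • (f y - f x - L (y - x)))
        (𝓝[A \ {x}] x) (𝓝 0) ↔
      ContinuousWithinAt f A x ∧
      upperTangentCone {p : EuclideanSpace ℝ (Fin m) × EuclideanSpace ℝ (Fin k) |
          p.1 ∈ A ∧ p.2 = f p.1} (x, f x)
        ⊆ {p : EuclideanSpace ℝ (Fin m) × EuclideanSpace ℝ (Fin k) | p.2 = L p.1} := by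
  set g : EuclideanSpace ℝ (Fin m) → EuclideanSpace ℝ (Fin k) :=
    fun y => ‖y - x‖⁻¹ • (f y - f x - L (y - x)) with hg
  have hLcont : Continuous L := L.continuous_of_finiteDimensional
  constructor
  · rintro hdiff
    -- continuity
    have hcont : ContinuousWithinAt f A x := by
      have h1 : Tendsto (fun y => f y - f x) (𝓝[A \ {x}] x) (𝓝 0) := by
        have hsub : Tendsto (fun y => y - x) (𝓝[A \ {x}] x) (𝓝 0) := by
          have h0 : Tendsto (fun y : EuclideanSpace ℝ (Fin m) => y) (𝓝[A \ {x}] x) (𝓝 x) :=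
            tendsto_id.mono_right nhdsWithin_le_nhds
          simpa using h0.sub_const x
        have h2 : Tendsto (fun y => ‖y - x‖ • g y + L (y - x)) (𝓝[A \ {x}] x) (𝓝 0) := by
          have ha := hsub.norm.smul hdiff
          have hb : Tendsto (fun y => L (y - x)) (𝓝[A \ {x}] x) (𝓝 (L 0)) :=
            (hLcont.tendsto 0).comp hsub
          simpa using ha.add hb
        refine h2.congr' ?_
        filter_upwards [self_mem_nhdsWithin] with y hy
        have hyx : y ≠ x := hy.2
        have hn : ‖y - x‖ ≠ 0 := by
          simp [sub_eq_zero, hyx]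
        rw [hg]
        simp only []
        rw [smul_inv_smul₀ hn]
        abel
      have h1' : Tendsto f (𝓝[A \ {x}] x) (𝓝 (f x)) := by
        have := h1.add (tendsto_const_nhds (x := f x))
        simpa using this
      have hA : A ⊆ (A \ {x}) ∪ {x} := by
        intro y hy
        by_cases h : y = x
        · exact Or.inr h
        · exact Or.inl ⟨hy, h⟩
      have : Tendsto f (𝓝[(A \ {x}) ∪ {x}] x) (𝓝 (f x)) := by
        rw [nhdsWithin_union]
        refine Tendsto.sup h1' ?_
        rw [nhdsWithin_singleton]
        simpa using tendsto_pure_nhds f x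
      exact this.mono_left (nhdsWithin_mono x hA)
    refine ⟨hcont, ?_⟩
    -- cone containment
    rintro w ⟨lam, u, hpos, hlam0, hmem, hulim, hquot⟩
    have hq1 : Tendsto (fun n => (lam n)⁻¹ • ((u n).1 - x)) atTop (𝓝 w.1) := by
      have := (continuous_fst.tendsto w).comp hquot
      simpa [Function.comp_def] using this
    have hq2 : Tendsto (fun n => (lam n)⁻¹ • ((u n).2 - f x)) atTop (𝓝 w.2) := by
      have := (continuous_snd.tendsto w).comp hquot
      simpa [Function.comp_def] using this
    by_cases hcase : ∀ᶠ n in atTop, (u n).1 ≠ x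
    · -- main case
      have hxi : Tendsto (fun n => (u n).1) atTop (𝓝[A \ {x}] x) := by
        rw [tendsto_nhdsWithin_iff]
        constructor
        · exact (continuous_fst.tendsto _).comp hulim
        · filter_upwards [hcase] with n hn
          exact ⟨(hmem n).1, hn⟩
      have hgxi : Tendsto (fun n => g ((u n).1)) atTop (𝓝 0) := hdiff.comp hxi
      -- remainder term tends to 0
      have hrem : Tendsto (fun n => (lam n)⁻¹ • (f ((u n).1) - f x - L ((u n).1 - x))) atTop (𝓝 0) := by
        rw [tendsto_zero_iff_norm_tendsto_zero]
        have heq : ∀ᶠ n in atTop,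
            ‖(lam n)⁻¹ • (f ((u n).1) - f x - L ((u n).1 - x))‖
              = ‖(lam n)⁻¹ • ((u n).1 - x)‖ * ‖g ((u n).1)‖ := by
          filter_upwards [hcase] with n hn
          have hnz : ‖(u n).1 - x‖ ≠ 0 := by simp [sub_eq_zero, hn]
          have hr : f ((u n).1) - f x - L ((u n).1 - x) = ‖(u n).1 - x‖ • g ((u n).1) := by
            simp only [hg]
            exact (smul_inv_smul₀ hnz _).symm
          rw [hr]
          simp only [norm_smul, norm_inv, norm_norm, Real.norm_eq_abs, abs_norm]
          ring
        have hgxi0 : Tendsto (fun n => ‖g ((u n).1)‖) atTop (𝓝 0) := by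
          simpa using hgxi.norm
        have hprod : Tendsto (fun n => ‖(lam n)⁻¹ • ((u n).1 - x)‖ * ‖g ((u n).1)‖)
            atTop (𝓝 (‖w.1‖ * 0)) := hq1.norm.mul hgxi0
        rw [mul_zero] at hprod
        exact hprod.congr' (heq.mono fun n hn => hn.symm)
      have hL1 : Tendsto (fun n => L ((lam n)⁻¹ • ((u n).1 - x))) atTop (𝓝 (L w.1)) :=
        (hLcont.tendsto _).comp hq1
      have hsum : Tendsto (fun n => (lam n)⁻¹ • (f ((u n).1) - f x)) atTop (𝓝 (L w.1)) := by
        have h3 := hrem.add hL1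
        rw [zero_add] at h3
        refine h3.congr fun n => ?_
        rw [map_smul, ← smul_add]
        congr 1
        abel
      have hq2' : Tendsto (fun n => (lam n)⁻¹ • (f ((u n).1) - f x)) atTop (𝓝 w.2) := by
        refine hq2.congr fun n => ?_
        rw [(hmem n).2]
      exact tendsto_nhds_unique hq2' hsum
    · -- frequent case: u n = x frequently, so w = 0
      have hfreq : ∃ᶠ n in atTop, (u n).1 = x := by
        rw [Filter.not_eventually] at hcase
        simpa using hcase
      have hw0 : w = 0 := by
        have hmemcl : w ∈ closure ({0} : Set (EuclideanSpace ℝ (Fin m) × EuclideanSpace ℝ (Fin k))) := by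
          refine mem_closure_of_frequently_of_tendsto ?_ hquot
          refine hfreq.mono ?_
          intro n hn
          have huv : u n = (x, f x) := by
            refine Prod.ext hn ?_
            rw [(hmem n).2, hn]
          simp [huv]
        simpa using hmemcl
      simp [Set.mem_setOf_eq, hw0, Prod.snd_zero, Prod.fst_zero, map_zero]
  · rintro ⟨hcont, hcone⟩
    rw [tendsto_iff_seq_tendsto]
    intro y hy
    by_contra hnot
    rw [Metric.tendsto_atTop] at hnot
    push_neg at hnot
    obtain ⟨ε, hε, hfr⟩ := hnot
    have hmemy : ∀ᶠ n in atTop, y n ∈ A \ {x} :=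
      (tendsto_nhdsWithin_iff.mp hy).2
    have hfreq : ∃ᶠ n in atTop, y n ∈ A \ {x} ∧ ε ≤ ‖g (y n)‖ := by
      refine ((frequently_atTop.mpr ?_).and_eventually hmemy).mono fun n hn => ⟨hn.2, hn.1⟩
      intro N
      obtain ⟨n, hnN, hd⟩ := hfr N
      refine ⟨n, hnN, ?_⟩
      rw [Function.comp_apply, dist_zero_right] at hd
      exact hd
    obtain ⟨φ, hφ, hP⟩ := extraction_of_frequently_atTop hfreq
    set z : ℕ → EuclideanSpace ℝ (Fin m) := fun n => y (φ n) with hzdef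
    have hzmem : ∀ n, z n ∈ A \ {x} := fun n => (hP n).1
    have hgz : ∀ n, ε ≤ ‖g (z n)‖ := fun n => (hP n).2
    have hz : Tendsto z atTop (𝓝[A \ {x}] x) := hy.comp hφ.tendsto_atTop
    have hzx : Tendsto z atTop (𝓝 x) := hz.mono_right nhdsWithin_le_nhds
    have hzA : Tendsto z atTop (𝓝[A] x) := by
      rw [tendsto_nhdsWithin_iff]
      exact ⟨hzx, Eventually.of_forall fun n => (hzmem n).1⟩
    have hfz : Tendsto (fun n => f (z n)) atTop (𝓝 (f x)) := hcont.tendsto.comp hzA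
    set lam : ℕ → ℝ := fun n => ‖z n - x‖ + ‖f (z n) - f x‖ with hlamdef
    have hzne : ∀ n, z n - x ≠ 0 := fun n => sub_ne_zero.mpr (hzmem n).2
    have hlampos : ∀ n, 0 < lam n := fun n =>
      add_pos_of_pos_of_nonneg (norm_pos_iff.mpr (hzne n)) (norm_nonneg _)
    have hzx0 : Tendsto (fun n => z n - x) atTop (𝓝 0) := by
      simpa using hzx.sub_const x
    have hfz0 : Tendsto (fun n => f (z n) - f x) atTop (𝓝 0) := by
      simpa using hfz.sub_const (f x)
    have hlam0 : Tendsto lam atTop (𝓝 0) := by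
      have := (hzx0.norm.add hfz0.norm)
      simpa using this
    set v : ℕ → EuclideanSpace ℝ (Fin m) × EuclideanSpace ℝ (Fin k) :=
      fun n => (lam n)⁻¹ • ((z n, f (z n)) - (x, f x)) with hvdef
    have hvball : ∀ n, v n ∈ closedBall (0 : EuclideanSpace ℝ (Fin m) × EuclideanSpace ℝ (Fin k)) 1 := by
      intro n
      rw [mem_closedBall_zero_iff, hvdef]
      simp only [Prod.smul_mk, Prod.norm_def, Prod.mk_sub_mk, Prod.smul_fst, Prod.smul_snd,
        Prod.fst_sub, Prod.snd_sub]
      rw [norm_smul, norm_smul, norm_inv, Real.norm_eq_abs, abs_of_pos (hlampos n)]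
      refine sup_le ?_ ?_
      · rw [inv_mul_eq_div, div_le_one (hlampos n)]
        exact le_add_of_nonneg_right (norm_nonneg _)
      · rw [inv_mul_eq_div, div_le_one (hlampos n)]
        exact le_add_of_nonneg_left (norm_nonneg _)
    obtain ⟨w, -, ψ, hψ, hvw⟩ := tendsto_subseq_of_bounded isBounded_closedBall hvball
    have hv1 : Tendsto (fun n => (v (ψ n)).1) atTop (𝓝 w.1) :=
      (continuous_fst.tendsto w).comp hvw
    have hv2 : Tendsto (fun n => (v (ψ n)).2) atTop (𝓝 w.2) :=
      (continuous_snd.tendsto w).comp hvw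
    have hv1eq : ∀ n, (v n).1 = (lam n)⁻¹ • (z n - x) := fun n => rfl
    have hv2eq : ∀ n, (v n).2 = (lam n)⁻¹ • (f (z n) - f x) := fun n => rfl
    have hwcone : w ∈ upperTangentCone {p : EuclideanSpace ℝ (Fin m) × EuclideanSpace ℝ (Fin k) |
        p.1 ∈ A ∧ p.2 = f p.1} (x, f x) := by
      refine ⟨fun n => lam (ψ n), fun n => (z (ψ n), f (z (ψ n))), fun n => hlampos _,
        hlam0.comp hψ.tendsto_atTop, fun n => ⟨(hzmem _).1, rfl⟩, ?_, ?_⟩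
      · exact (hzx.comp hψ.tendsto_atTop).prodMk_nhds (hfz.comp hψ.tendsto_atTop)
      · exact hvw
    have hwL : w.2 = L w.1 := hcone hwcone
    have hsum1 : ∀ n, ‖(v n).1‖ + ‖(v n).2‖ = 1 := by
      intro n
      rw [hv1eq, hv2eq, norm_smul, norm_smul, norm_inv, Real.norm_eq_abs,
        abs_of_pos (hlampos n), ← mul_add]
      exact inv_mul_cancel₀ (hlampos n).ne'
    have hconst : Tendsto (fun n => ‖(v (ψ n)).1‖ + ‖(v (ψ n)).2‖) atTop (𝓝 1) := by
      have he : (fun n => ‖(v (ψ n)).1‖ + ‖(v (ψ n)).2‖) = fun _ => (1:ℝ) :=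
        funext fun n => hsum1 (ψ n)
      rw [he]
      exact tendsto_const_nhds
    have hsumw : ‖w.1‖ + ‖w.2‖ = 1 := tendsto_nhds_unique (hv1.norm.add hv2.norm) hconst
    have hw1 : w.1 ≠ 0 := by
      intro h0
      rw [h0, map_zero] at hwL
      rw [h0, hwL] at hsumw
      simp at hsumw
    have hineq : ∀ n, ε * ‖(v (ψ n)).1‖ ≤ ‖(v (ψ n)).2 - L ((v (ψ n)).1)‖ := by
      intro n
      have hnz : ‖z (ψ n) - x‖ ≠ 0 := norm_ne_zero_iff.mpr (hzne (ψ n))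
      have h1 : (v (ψ n)).2 - L ((v (ψ n)).1)
          = (lam (ψ n))⁻¹ • (f (z (ψ n)) - f x - L (z (ψ n) - x)) := by
        rw [hv1eq, hv2eq, map_smul, ← smul_sub]
      have h2 : f (z (ψ n)) - f x - L (z (ψ n) - x) = ‖z (ψ n) - x‖ • g (z (ψ n)) := by
        simp only [hg]
        exact (smul_inv_smul₀ hnz _).symm
      rw [h1, h2, hv1eq]
      simp only [norm_smul, norm_inv, norm_norm, Real.norm_eq_abs, abs_norm]
      rw [abs_of_pos (hlampos (ψ n))]
      nlinarith [mul_nonneg (mul_nonneg (inv_pos.mpr (hlampos (ψ n))).le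
        (norm_nonneg (z (ψ n) - x))) (sub_nonneg.mpr (hgz (ψ n))),
        inv_pos.mpr (hlampos (ψ n)), norm_nonneg (z (ψ n) - x), hgz (ψ n)]
    have hlim1 : Tendsto (fun n => ε * ‖(v (ψ n)).1‖) atTop (𝓝 (ε * ‖w.1‖)) :=
      tendsto_const_nhds.mul hv1.norm
    have hlim2 : Tendsto (fun n => ‖(v (ψ n)).2 - L ((v (ψ n)).1)‖) atTop
        (𝓝 ‖w.2 - L w.1‖) := (hv2.sub ((hLcont.tendsto _).comp hv1)).norm
    have hle : ε * ‖w.1‖ ≤ ‖w.2 - L w.1‖ :=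
      le_of_tendsto_of_tendsto hlim1 hlim2 (Filter.Eventually.of_forall hineq)
    rw [hwL, sub_self, norm_zero] at hle
    have hpos' : 0 < ε * ‖w.1‖ := mul_pos hε (norm_pos_iff.mpr hw1)
    linarith
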